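/- arXiv:1410.3100 — 2 statements merged into one kernel-verified Lean document; each statement's English description precedes it below -/
import Mathlib

section
/- Let Ω ⊂ ℝ² be a domain, let α ∈ (0,1], and let Q₁,…,Q_k ⊂ Ω (k ≥ 1) be squares such that for each n ∈ {1,…,k−1}: Qₙ and Qₙ₊₁ are touching squares, and either (a) Q̄ₙ ∩ Q̄ₙ₊₁ is a nondegenerate closed segment [sₙ,tₙ] whose open part (sₙ,tₙ) is contained in Ω, or (b) Q̄ₙ ∩ Q̄ₙ₊₁ is a single point wₙ and there exists a square centered at wₙ which is contained in Ω. Let x be the center of Q₁ and let y ∈ Q̄_k ∩ Ω. Then d_{α,Ω}(x,y) ≤ (12/α)·Σ_{n=1}^{k} (diam Qₙ)^α. -/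
open Set Metric
open MeasureTheory

/-- The Euclidean norm of a vector of `ℝ × ℝ` (whose ambient norm is the sup norm). -/
noncomputable def euclidNorm (v : ℝ × ℝ) : ℝ := Real.sqrt (v.1 ^ 2 + v.2 ^ 2)

/-- The subhyperbolic distance `d_{α,Ω}(x,y)`: the infimum of
`∫_γ dist(u,∂Ω)^(α-1) ds(u)` (Euclidean arc length, uniform-norm distance to the
boundary) over rectifiable (Lipschitz-parametrized) curves joining `x` to `y`
inside `Ω`. -/
noncomputable def dSH (Ω : Set (ℝ × ℝ)) (α : ℝ) (x y : ℝ × ℝ) : ℝ :=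
  sInf {L : ℝ | ∃ γ : ℝ → ℝ × ℝ, (∃ K : NNReal, LipschitzWith K γ) ∧
    γ 0 = x ∧ γ 1 = y ∧ (∀ t ∈ Set.Icc (0:ℝ) 1, γ t ∈ Ω) ∧
    L = ∫ t in (0:ℝ)..1,
      Metric.infDist (γ t) (frontier Ω) ^ (α - 1) * euclidNorm (deriv γ t)}

lemma euclidNorm_nonneg (v : ℝ × ℝ) : 0 ≤ euclidNorm v := Real.sqrt_nonneg _

lemma euclidNorm_smul (a : ℝ) (v : ℝ × ℝ) : euclidNorm (a • v) = |a| * euclidNorm v := by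
  unfold euclidNorm
  have h1 : (a • v).1 = a * v.1 := rfl
  have h2 : (a • v).2 = a * v.2 := rfl
  rw [h1, h2, show (a * v.1) ^ 2 + (a * v.2) ^ 2 = a ^ 2 * (v.1 ^ 2 + v.2 ^ 2) by ring,
    Real.sqrt_mul (sq_nonneg a), Real.sqrt_sq_eq_abs]

lemma euclidNorm_zero : euclidNorm (0 : ℝ × ℝ) = 0 := by simp [euclidNorm]

lemma euclidNorm_le_two_norm (v : ℝ × ℝ) : euclidNorm v ≤ 2 * ‖v‖ := by
  have h1 : |v.1| ≤ ‖v‖ := by rw [Prod.norm_def]; exact le_max_of_le_left (le_of_eq (Real.norm_eq_abs _).symm)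
  have h2 : |v.2| ≤ ‖v‖ := by rw [Prod.norm_def]; exact le_max_of_le_right (le_of_eq (Real.norm_eq_abs _).symm)
  have hn : (0:ℝ) ≤ ‖v‖ := norm_nonneg v
  have : v.1 ^ 2 + v.2 ^ 2 ≤ (2 * ‖v‖) ^ 2 := by
    have e1 : v.1 ^ 2 ≤ ‖v‖ ^ 2 := by
      rw [← sq_abs v.1]; exact pow_le_pow_left₀ (abs_nonneg _) h1 2
    have e2 : v.2 ^ 2 ≤ ‖v‖ ^ 2 := by
      rw [← sq_abs v.2]; exact pow_le_pow_left₀ (abs_nonneg _) h2 2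
    nlinarith
  calc euclidNorm v ≤ Real.sqrt ((2 * ‖v‖) ^ 2) := Real.sqrt_le_sqrt this
    _ = 2 * ‖v‖ := Real.sqrt_sq (by linarith)

lemma deriv_comp_affine (f : ℝ → ℝ × ℝ) (a b t : ℝ) (ha : a ≠ 0) :
    deriv (fun s => f (a * s + b)) t = a • deriv f (a * t + b) := by
  by_cases h : DifferentiableAt ℝ f (a * t + b)
  · have h1 : HasDerivAt (fun s : ℝ => a * s + b) a t := by
      simpa using ((hasDerivAt_id t).const_mul a).add_const b
    have h2 : HasDerivAt (fun s => f (a * s + b)) (a • deriv f (a * t + b)) t :=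
      (h.hasDerivAt.scomp t h1 : HasDerivAt (f ∘ fun s => a * s + b) _ t)
    exact h2.deriv
  · have h2 : ¬ DifferentiableAt ℝ (fun s => f (a * s + b)) t := by
      intro hd
      apply h
      have hinner : DifferentiableAt ℝ (fun u : ℝ => (u - b) / a) (a * t + b) := by fun_prop
      have harg : (a * t + b - b) / a = t := by field_simp; ring
      have hd' : DifferentiableAt ℝ (fun s => f (a * s + b)) ((a * t + b - b) / a) := by rwa [harg]
      have hcomp := hd'.comp (a * t + b) hinner
      have heq : ((fun s => f (a * s + b)) ∘ fun u : ℝ => (u - b) / a) = f := by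
        funext u
        show f (a * ((u - b) / a) + b) = f u
        congr 1
        field_simp
        ring
      rwa [heq] at hcomp
    rw [deriv_zero_of_not_differentiableAt h2, deriv_zero_of_not_differentiableAt h, smul_zero]

noncomputable def shF (Ω : Set (ℝ × ℝ)) (α : ℝ) (γ : ℝ → ℝ × ℝ) (t : ℝ) : ℝ :=
  Metric.infDist (γ t) (frontier Ω) ^ (α - 1) * euclidNorm (deriv γ t)

lemma shF_nonneg (Ω : Set (ℝ × ℝ)) (α : ℝ) (γ : ℝ → ℝ × ℝ) (t : ℝ) : 0 ≤ shF Ω α γ t :=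
  mul_nonneg (Real.rpow_nonneg Metric.infDist_nonneg _) (euclidNorm_nonneg _)

def Good (Ω : Set (ℝ × ℝ)) (α : ℝ) (x y : ℝ × ℝ) (L : ℝ) : Prop :=
  ∃ γ : ℝ → ℝ × ℝ, (∃ K : NNReal, LipschitzWith K γ) ∧ γ 0 = x ∧ γ 1 = y ∧
    (∀ t ∈ Set.Icc (0:ℝ) 1, γ t ∈ Ω) ∧
    IntervalIntegrable (shF Ω α γ) MeasureTheory.volume 0 1 ∧
    L = ∫ t in (0:ℝ)..1, shF Ω α γ t

lemma dSH_le_of_good {Ω : Set (ℝ × ℝ)} {α : ℝ} {x y : ℝ × ℝ} {L : ℝ}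
    (h : Good Ω α x y L) : dSH Ω α x y ≤ L := by
  obtain ⟨γ, hK, h0, h1, hmem, _, hL⟩ := h
  apply csInf_le
  · refine ⟨0, fun M hM => ?_⟩
    obtain ⟨γ', _, _, _, _, hM⟩ := hM
    rw [hM]
    exact intervalIntegral.integral_nonneg zero_le_one fun u _ => shF_nonneg Ω α γ' u
  · exact ⟨γ, hK, h0, h1, hmem, hL⟩

lemma good_const {Ω : Set (ℝ × ℝ)} {α : ℝ} {x : ℝ × ℝ} (hx : x ∈ Ω) : Good Ω α x x 0 := by
  refine ⟨fun _ => x, ⟨0, LipschitzWith.const x⟩, rfl, rfl, fun _ _ => hx, ?_, ?_⟩ <;>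
  · have hz : shF Ω α (fun _ => x) = fun _ => (0:ℝ) := by
      funext t
      simp [shF, euclidNorm_zero]
    rw [hz]
    first
      | exact intervalIntegrable_const
      | simp

lemma good_reverse {Ω : Set (ℝ × ℝ)} {α : ℝ} {x y : ℝ × ℝ} {L : ℝ}
    (h : Good Ω α x y L) : Good Ω α y x L := by
  obtain ⟨γ, ⟨K, hK⟩, h0, h1, hmem, hint, hL⟩ := h
  set γ' : ℝ → ℝ × ℝ := fun t => γ (1 - t) with hγ'
  have hshF : shF Ω α γ' = fun t => shF Ω α γ (1 - t) := by
    funext t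
    have hre : γ' = fun s => γ ((-1) * s + 1) := by funext s; simp [hγ']; ring_nf
    have hd : deriv γ' t = (-1 : ℝ) • deriv γ ((-1) * t + 1) := by
      rw [hre]; exact deriv_comp_affine γ (-1) 1 t (by norm_num)
    have harg : (-1 : ℝ) * t + 1 = 1 - t := by ring
    rw [harg] at hd
    rw [shF, shF, hd, euclidNorm_smul]; simp only [hγ']
    norm_num
  refine ⟨γ', ⟨K, ?_⟩, by simp [hγ', h1], by simp [hγ', h0], ?_, ?_, ?_⟩
  · apply LipschitzWith.of_dist_le_mul
    intro s t
    have h2 := hK.dist_le_mul (1 - s) (1 - t)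
    have h3 : dist (1 - s) (1 - t) = dist s t := by
      rw [Real.dist_eq, Real.dist_eq, show (1:ℝ) - s - (1 - t) = -(s - t) by ring, abs_neg]
    rw [h3] at h2
    exact h2
  · intro t ht
    exact hmem (1 - t) ⟨by linarith [ht.2], by linarith [ht.1]⟩
  · rw [hshF]
    have h4 := (hint.comp_sub_left 1).symm
    simpa using h4
  · rw [hshF, hL, intervalIntegral.integral_comp_sub_left (shF Ω α γ) 1]
    norm_num

lemma good_segment {Ω : Set (ℝ × ℝ)} (hΩo : IsOpen Ω) {α : ℝ} (hα0 : 0 < α) (hα1 : α ≤ 1)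
    {cc p : ℝ × ℝ} {rr : ℝ} (hrr : 0 < rr) (hsub : Metric.ball cc rr ⊆ Ω)
    (hpc : dist p cc ≤ rr) (hpΩ : p ∈ Ω) :
    ∃ L, Good Ω α cc p L ∧ L ≤ 2 / α * rr ^ α := by
  set v : ℝ × ℝ := p - cc with hv
  set γ : ℝ → ℝ × ℝ := fun t => cc + t • v with hγ
  have hd : ∀ t, HasDerivAt γ v t := by
    intro t
    have h1 : HasDerivAt (fun s : ℝ => s • v) ((1:ℝ) • v) t := (hasDerivAt_id t).smul_const v
    exact (by simpa [one_smul] using h1 : HasDerivAt (fun s : ℝ => s • v) v t).const_add cc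
  have hvn : ‖v‖ ≤ rr := by rw [hv, ← dist_eq_norm]; exact hpc
  have hE2 : euclidNorm v ≤ 2 * rr := le_trans (euclidNorm_le_two_norm v) (by linarith)
  have hγ0 : γ 0 = cc := by simp [hγ]
  have hγ1 : γ 1 = p := by simp [hγ, hv]
  have hdist : ∀ t : ℝ, 0 ≤ t → dist (γ t) cc = t * ‖v‖ := by
    intro t ht
    rw [dist_eq_norm, show γ t - cc = t • v by simp [hγ], norm_smul, Real.norm_eq_abs,
      abs_of_nonneg ht]
  have hmem : ∀ t ∈ Set.Icc (0:ℝ) 1, γ t ∈ Ω := by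
    intro t ht
    rcases eq_or_lt_of_le ht.2 with h1 | h1
    · rw [h1, hγ1]; exact hpΩ
    · apply hsub
      rw [mem_ball, hdist t ht.1]
      have h2 : t * ‖v‖ ≤ t * rr := mul_le_mul_of_nonneg_left hvn ht.1
      nlinarith
  have hLip : LipschitzWith ‖v‖₊ γ := by
    apply LipschitzWith.of_dist_le_mul
    intro s t
    rw [dist_eq_norm, show γ s - γ t = (s - t) • v by simp [hγ, sub_smul],
      norm_smul, Real.norm_eq_abs, coe_nnnorm, Real.dist_eq]
    ring_nf
    exact le_refl _
  have hFeq : shF Ω α γ = fun t => Metric.infDist (γ t) (frontier Ω) ^ (α - 1) * euclidNorm v := by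
    funext t; rw [shF, (hd t).deriv]
  by_cases hfr : frontier Ω = ∅
  · have hc : shF Ω α γ = fun _ => (0:ℝ) ^ (α - 1) * euclidNorm v := by
      rw [hFeq]; funext t; rw [hfr, Metric.infDist_empty]
    refine ⟨(0:ℝ) ^ (α - 1) * euclidNorm v,
      ⟨γ, ⟨_, hLip⟩, hγ0, hγ1, hmem, by rw [hc]; exact intervalIntegrable_const,
        by rw [hc]; simp⟩, ?_⟩
    rcases eq_or_lt_of_le hα1 with he | hl
    · have h20 : (0:ℝ) ^ (α - 1) = 1 := by rw [he]; norm_num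
      rw [h20, one_mul, he, Real.rpow_one]
      linarith
    · rw [Real.zero_rpow (by linarith : α - 1 ≠ 0), zero_mul]
      positivity
  · have hne : (frontier Ω).Nonempty := Set.nonempty_iff_ne_empty.mpr hfr
    have hlow : ∀ t : ℝ, t ∈ Set.Icc (0:ℝ) 1 → rr * (1 - t) ≤ Metric.infDist (γ t) (frontier Ω) := by
      intro t ht
      by_contra hcon
      push_neg at hcon
      obtain ⟨w, hw, hwlt⟩ := (Metric.infDist_lt_iff hne).mp hcon
      have hwΩ : w ∉ Ω := fun hwin => (hΩo.frontier_eq ▸ hw).2 hwin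
      have hwb : w ∉ Metric.ball cc rr := fun hb => hwΩ (hsub hb)
      rw [mem_ball] at hwb
      push_neg at hwb
      have htri : dist w cc ≤ dist w (γ t) + dist (γ t) cc := dist_triangle _ _ _
      have h5 : dist (γ t) cc ≤ t * rr := by
        rw [hdist t ht.1]; exact mul_le_mul_of_nonneg_left hvn ht.1
      rw [dist_comm w (γ t)] at htri
      nlinarith [ht.1, ht.2]
    have hpos : ∀ t ∈ Set.Icc (0:ℝ) 1, 0 < Metric.infDist (γ t) (frontier Ω) := by
      intro t ht
      refine (IsClosed.notMem_iff_infDist_pos isClosed_frontier hne).mp ?_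
      intro hmemfr
      exact (hΩo.frontier_eq ▸ hmemfr).2 (hmem t ht)
    have hγc : Continuous γ := hLip.continuous
    have hcont : ContinuousOn (shF Ω α γ) (Set.Icc (0:ℝ) 1) := by
      rw [hFeq]
      apply ContinuousOn.mul _ continuousOn_const
      apply ContinuousOn.rpow_const
      · exact ((Metric.continuous_infDist_pt (frontier Ω)).comp hγc).continuousOn
      · intro t ht; exact Or.inl (ne_of_gt (hpos t ht))
    have hint : IntervalIntegrable (shF Ω α γ) volume 0 1 := by
      apply ContinuousOn.intervalIntegrable
      rwa [uIcc_of_le zero_le_one]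
    set E := euclidNorm v with hEdef
    have hE0 : 0 ≤ E := euclidNorm_nonneg v
    set C : ℝ := rr ^ (α - 1) * E with hC
    set h : ℝ → ℝ := fun t => C * (1 - t) ^ (α - 1) with hh
    have hhint : IntervalIntegrable h volume 0 1 := by
      have h6 : IntervalIntegrable (fun u : ℝ => u ^ (α - 1)) volume 0 1 :=
        intervalIntegral.intervalIntegrable_rpow' (by linarith)
      have h7 := (h6.comp_sub_left 1).symm
      have h8 : IntervalIntegrable (fun u : ℝ => (1 - u) ^ (α - 1)) volume 0 1 := by
        simpa using h7
      exact h8.const_mul C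
    have hmono : (∫ t in (0:ℝ)..1, shF Ω α γ t) ≤ ∫ t in (0:ℝ)..1, h t := by
      apply intervalIntegral.integral_mono_ae_restrict zero_le_one hint hhint
      have hae : ∀ᵐ t : ℝ ∂volume, t ∉ ({1} : Set ℝ) :=
        (Set.countable_singleton (1:ℝ)).ae_notMem volume
      filter_upwards [ae_restrict_mem measurableSet_Icc, ae_restrict_of_ae hae] with t ht hne1
      have ht1 : t < 1 := lt_of_le_of_ne ht.2 (by simpa using hne1)
      have hb : 0 < rr * (1 - t) := by nlinarith [ht.1]
      have h9 : Metric.infDist (γ t) (frontier Ω) ^ (α - 1) ≤ (rr * (1 - t)) ^ (α - 1) :=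
        Real.rpow_le_rpow_of_nonpos hb (hlow t ht) (by linarith)
      have h10 : (rr * (1 - t)) ^ (α - 1) = rr ^ (α - 1) * (1 - t) ^ (α - 1) :=
        Real.mul_rpow (le_of_lt hrr) (by linarith)
      calc shF Ω α γ t = Metric.infDist (γ t) (frontier Ω) ^ (α - 1) * E := by rw [hFeq]
        _ ≤ (rr * (1 - t)) ^ (α - 1) * E := mul_le_mul_of_nonneg_right h9 hE0
        _ = h t := by rw [h10, hh, hC]; ring
    have hval : (∫ t in (0:ℝ)..1, h t) = C * (1 / α) := by
      rw [hh, intervalIntegral.integral_const_mul]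
      congr 1
      have h12 : (∫ t in (0:ℝ)..1, (1 - t) ^ (α - 1)) = ∫ u in (0:ℝ)..1, u ^ (α - 1) := by
        have h11 := intervalIntegral.integral_comp_sub_left (a := (0:ℝ)) (b := (1:ℝ))
          (fun u : ℝ => u ^ (α - 1)) 1
        simpa using h11
      rw [h12, integral_rpow (Or.inl (by linarith))]
      rw [show α - 1 + 1 = α by ring, Real.one_rpow, Real.zero_rpow (ne_of_gt hα0)]
      norm_num
    refine ⟨∫ t in (0:ℝ)..1, shF Ω α γ t, ⟨γ, ⟨_, hLip⟩, hγ0, hγ1, hmem, hint, rfl⟩, ?_⟩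
    have hrp : 0 < rr ^ (α - 1) := Real.rpow_pos_of_pos hrr _
    have hra : rr ^ (α - 1) * rr = rr ^ α := by
      rw [show rr ^ α = rr ^ (α - 1 + 1) by norm_num, Real.rpow_add hrr, Real.rpow_one]
    have hCle : C ≤ 2 * rr ^ α := by
      rw [hC]
      calc rr ^ (α - 1) * E ≤ rr ^ (α - 1) * (2 * rr) :=
            mul_le_mul_of_nonneg_left hE2 (le_of_lt hrp)
        _ = 2 * rr ^ α := by rw [← hra]; ring
    calc (∫ t in (0:ℝ)..1, shF Ω α γ t) ≤ C * (1 / α) := by rw [← hval]; exact hmono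
      _ ≤ (2 * rr ^ α) * (1 / α) := by
          apply mul_le_mul_of_nonneg_right hCle
          positivity
      _ = 2 / α * rr ^ α := by ring

lemma good_concat {Ω : Set (ℝ × ℝ)} {α : ℝ} {x y z : ℝ × ℝ} {L₁ L₂ : ℝ}
    (h₁ : Good Ω α x y L₁) (h₂ : Good Ω α y z L₂) : Good Ω α x z (L₁ + L₂) := by
  obtain ⟨γ₁, ⟨K₁, hK₁⟩, h10, h11, hmem₁, hint₁, hL₁⟩ := h₁
  obtain ⟨γ₂, ⟨K₂, hK₂⟩, h20, h21, hmem₂, hint₂, hL₂⟩ := h₂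
  set γ : ℝ → ℝ × ℝ := fun t => if t ≤ 1/2 then γ₁ (2*t) else γ₂ (2*t - 1) with hγ
  have hj : γ₁ 1 = γ₂ 0 := by rw [h11, h20]
  have hK1 : ∀ a b : ℝ, dist (γ₁ a) (γ₁ b) ≤ K₁ * |a - b| := by
    intro a b; have := hK₁.dist_le_mul a b; rwa [Real.dist_eq] at this
  have hK2 : ∀ a b : ℝ, dist (γ₂ a) (γ₂ b) ≤ K₂ * |a - b| := by
    intro a b; have := hK₂.dist_le_mul a b; rwa [Real.dist_eq] at this
  have hKnn : (0:ℝ) ≤ (K₁:ℝ) ∧ (0:ℝ) ≤ (K₂:ℝ) := ⟨K₁.coe_nonneg, K₂.coe_nonneg⟩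
  have key : ∀ s t : ℝ, s ≤ t → dist (γ s) (γ t) ≤ ((2*(K₁ ⊔ K₂) : NNReal) : ℝ) * dist s t := by
    intro s t hst
    have hks : ((2*(K₁ ⊔ K₂) : NNReal) : ℝ) = 2 * max (K₁:ℝ) (K₂:ℝ) := by push_cast; rfl
    have hmax1 : (K₁:ℝ) ≤ max (K₁:ℝ) (K₂:ℝ) := le_max_left _ _
    have hmax2 : (K₂:ℝ) ≤ max (K₁:ℝ) (K₂:ℝ) := le_max_right _ _
    have hdst : dist s t = t - s := by rw [Real.dist_eq, abs_of_nonpos (by linarith)]; ring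
    rw [hks, hdst]
    by_cases hs : s ≤ 1/2 <;> by_cases ht : t ≤ 1/2
    · have e1 : γ s = γ₁ (2*s) := if_pos hs
      have e2 : γ t = γ₁ (2*t) := if_pos ht
      rw [e1, e2]
      have := hK1 (2*s) (2*t)
      rw [abs_of_nonpos (by linarith)] at this
      nlinarith [hKnn.1]
    · have e1 : γ s = γ₁ (2*s) := if_pos hs
      have e2 : γ t = γ₂ (2*t - 1) := if_neg ht
      push_neg at ht
      rw [e1, e2]
      have htri : dist (γ₁ (2*s)) (γ₂ (2*t - 1)) ≤
          dist (γ₁ (2*s)) (γ₁ 1) + dist (γ₂ 0) (γ₂ (2*t - 1)) := by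
        calc dist (γ₁ (2*s)) (γ₂ (2*t - 1)) ≤
            dist (γ₁ (2*s)) (γ₁ 1) + dist (γ₁ 1) (γ₂ (2*t - 1)) := dist_triangle _ _ _
          _ = dist (γ₁ (2*s)) (γ₁ 1) + dist (γ₂ 0) (γ₂ (2*t - 1)) := by rw [hj]
      have b1 := hK1 (2*s) 1
      have b2 := hK2 0 (2*t - 1)
      rw [abs_of_nonpos (by linarith)] at b1
      rw [abs_of_nonpos (by linarith)] at b2
      nlinarith [hKnn.1, hKnn.2]
    · exact absurd (le_trans hst ht) hs
    · have e1 : γ s = γ₂ (2*s - 1) := if_neg hs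
      have e2 : γ t = γ₂ (2*t - 1) := if_neg ht
      rw [e1, e2]
      have := hK2 (2*s - 1) (2*t - 1)
      rw [abs_of_nonpos (by linarith)] at this
      nlinarith [hKnn.2]
  have hLip : LipschitzWith (2*(K₁ ⊔ K₂)) γ := by
    apply LipschitzWith.of_dist_le_mul
    intro a b
    rcases le_total a b with hab | hab
    · exact key a b hab
    · rw [dist_comm (γ a) (γ b), dist_comm a b]; exact key b a hab
  have hγ0 : γ 0 = x := by rw [hγ]; norm_num [h10]
  have hγ1 : γ 1 = z := by rw [hγ]; norm_num [h21]
  have hmem : ∀ t ∈ Set.Icc (0:ℝ) 1, γ t ∈ Ω := by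
    intro t ht
    by_cases hc : t ≤ 1/2
    · rw [hγ]; simp only [if_pos hc]
      exact hmem₁ (2*t) ⟨by linarith [ht.1], by linarith⟩
    · rw [hγ]; simp only [if_neg hc]
      push_neg at hc
      exact hmem₂ (2*t - 1) ⟨by linarith, by linarith [ht.2]⟩
  have h_left : ∀ t : ℝ, t < 1/2 → shF Ω α γ t = 2 * shF Ω α γ₁ (2*t) := by
    intro t ht
    have hev : γ =ᶠ[nhds t] fun s => γ₁ (2*s) := by
      filter_upwards [Iio_mem_nhds ht] with s hs
      exact if_pos (le_of_lt hs)
    have hdeq : deriv γ t = deriv (fun s => γ₁ (2*s)) t := hev.deriv_eq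
    have hda : deriv (fun s => γ₁ (2*s)) t = (2:ℝ) • deriv γ₁ (2*t) := by
      have h3 := deriv_comp_affine γ₁ 2 0 t (by norm_num)
      simpa using h3
    have hγt : γ t = γ₁ (2*t) := if_pos (le_of_lt ht)
    rw [shF, shF, hdeq, hda, euclidNorm_smul, hγt, show |(2:ℝ)| = 2 by norm_num]
    ring
  have h_right : ∀ t : ℝ, 1/2 < t → shF Ω α γ t = 2 * shF Ω α γ₂ (2*t - 1) := by
    intro t ht
    have hev : γ =ᶠ[nhds t] fun s => γ₂ (2*s - 1) := by
      filter_upwards [Ioi_mem_nhds ht] with s hs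
      exact if_neg (not_le.mpr hs)
    have hdeq : deriv γ t = deriv (fun s => γ₂ (2*s - 1)) t := hev.deriv_eq
    have hda : deriv (fun s => γ₂ (2*s - 1)) t = (2:ℝ) • deriv γ₂ (2*t - 1) := by
      have hre : (fun s : ℝ => γ₂ (2*s - 1)) = fun s : ℝ => γ₂ (2*s + (-1)) := by
        funext s; norm_num [sub_eq_add_neg]
      have h3 := deriv_comp_affine γ₂ 2 (-1) t (by norm_num)
      rw [hre, h3, show 2*t + (-1) = 2*t - 1 by ring]
    have hγt : γ t = γ₂ (2*t - 1) := if_neg (not_le.mpr ht)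
    rw [shF, shF, hdeq, hda, euclidNorm_smul, hγt, show |(2:ℝ)| = 2 by norm_num]
    ring
  have hae : ∀ᵐ t : ℝ ∂volume, t ≠ (1/2:ℝ) := by
    have := (Set.countable_singleton ((1:ℝ)/2)).ae_notMem volume
    filter_upwards [this] with t ht
    simpa using ht
  -- integrability on the left half
  have g1int : IntervalIntegrable (fun t => 2 * shF Ω α γ₁ (2*t)) volume 0 (1/2) := by
    have h4 : IntervalIntegrable (fun t => shF Ω α γ₁ (2*t)) volume 0 (1/2) := by
      have := hint₁.comp_mul_left (c := 2)
      norm_num at this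
      exact this
    exact h4.const_mul 2
  have Fl : IntervalIntegrable (shF Ω α γ) volume 0 (1/2) := by
    rw [intervalIntegrable_iff] at g1int ⊢
    apply g1int.congr
    rw [uIoc_of_le (by norm_num : (0:ℝ) ≤ 1/2)]
    filter_upwards [ae_restrict_mem measurableSet_Ioc, ae_restrict_of_ae hae] with t htm htne
    exact (h_left t (lt_of_le_of_ne htm.2 htne)).symm
  -- integrability on the right half
  have g2int : IntervalIntegrable (fun t => 2 * shF Ω α γ₂ (2*t - 1)) volume (1/2) 1 := by
    have h4 : IntervalIntegrable (fun t => shF Ω α γ₂ (2*t - 1)) volume (1/2) 1 := by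
      have h5 := (hint₂.comp_sub_right 1).comp_mul_left (c := 2)
      norm_num at h5
      exact h5
    exact h4.const_mul 2
  have Fr : IntervalIntegrable (shF Ω α γ) volume (1/2) 1 := by
    rw [intervalIntegrable_iff] at g2int ⊢
    apply g2int.congr
    rw [uIoc_of_le (by norm_num : (1:ℝ)/2 ≤ 1)]
    filter_upwards [ae_restrict_mem measurableSet_Ioc] with t htm
    exact (h_right t htm.1).symm
  have hintF : IntervalIntegrable (shF Ω α γ) volume 0 1 := Fl.trans Fr
  -- integral values
  have il : (∫ t in (0:ℝ)..(1/2), shF Ω α γ t) = L₁ := by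
    have e0 : (∫ t in (0:ℝ)..(1/2), shF Ω α γ t)
        = ∫ t in (0:ℝ)..(1/2), 2 * shF Ω α γ₁ (2*t) := by
      apply intervalIntegral.integral_congr_ae
      filter_upwards [hae] with t htne htm
      rw [uIoc_of_le (by norm_num : (0:ℝ) ≤ 1/2)] at htm
      exact h_left t (lt_of_le_of_ne htm.2 htne)
    have e1 : (∫ t in (0:ℝ)..(1/2), shF Ω α γ₁ (2*t))
        = (1/2) * ∫ t in (0:ℝ)..1, shF Ω α γ₁ t := by
      norm_num
    rw [e0, intervalIntegral.integral_const_mul, e1, hL₁]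
    ring
  have ir : (∫ t in (1/2:ℝ)..1, shF Ω α γ t) = L₂ := by
    have e0 : (∫ t in (1/2:ℝ)..1, shF Ω α γ t)
        = ∫ t in (1/2:ℝ)..1, 2 * shF Ω α γ₂ (2*t - 1) := by
      apply intervalIntegral.integral_congr_ae
      filter_upwards [hae] with t htne htm
      rw [uIoc_of_le (by norm_num : (1:ℝ)/2 ≤ 1)] at htm
      exact h_right t htm.1
    have e1 : (∫ t in (1/2:ℝ)..1, shF Ω α γ₂ (2*t - 1))
        = (1/2) * ∫ t in (0:ℝ)..1, shF Ω α γ₂ t := by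
      norm_num
    rw [e0, intervalIntegral.integral_const_mul, e1, hL₂]
    ring
  refine ⟨γ, ⟨_, hLip⟩, hγ0, hγ1, hmem, hintF, ?_⟩
  rw [← intervalIntegral.integral_add_adjacent_intervals Fl Fr, il, ir]

lemma diam_ball_ge {cc : ℝ × ℝ} {rr : ℝ} (h : 0 < rr) :
    rr ≤ Metric.diam (Metric.ball cc rr) := by
  set w : ℝ × ℝ := (rr/2, 0) with hw
  have hwn : ‖w‖ = rr/2 := by
    have h1 : ‖w.1‖ = rr/2 := by
      simp [hw, Real.norm_eq_abs, abs_of_pos h]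
    have h2 : ‖w.2‖ = (0:ℝ) := by simp [hw]
    rw [Prod.norm_def, h1, h2, max_eq_left (by linarith)]
  have ha : cc - w ∈ Metric.ball cc rr := by
    rw [mem_ball, dist_eq_norm, show cc - w - cc = -w by abel, norm_neg, hwn]
    linarith
  have hb : cc + w ∈ Metric.ball cc rr := by
    rw [mem_ball, dist_eq_norm, show cc + w - cc = w by abel, hwn]
    linarith
  have hd : dist (cc - w) (cc + w) = rr := by
    rw [dist_eq_norm, show cc - w - (cc + w) = (-2:ℝ) • w by module, norm_smul]
    rw [hwn, Real.norm_eq_abs, show |(-2:ℝ)| = 2 by norm_num]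
    ring
  calc rr = dist (cc - w) (cc + w) := hd.symm
    _ ≤ Metric.diam (Metric.ball cc rr) :=
        Metric.dist_le_diam_of_mem Metric.isBounded_ball ha hb

/-- Let `Ω ⊂ ℝ²` be a domain (uniform norm; `Metric.ball` is an
open axis-parallel square), `α ∈ (0,1]`, and `Q₀,…,Q_{k-1} ⊆ Ω` squares such that
consecutive squares are touching and their closures meet either in a nondegenerate
segment whose open part lies in `Ω`, or in a single point at which some square
inside `Ω` is centered.  If `x` is the center of `Q₀` and `y ∈ Q̄_{k-1} ∩ Ω`, then
`d_{α,Ω}(x,y) ≤ (12/α) Σₙ (diam Qₙ)^α`. -/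
theorem chain_of_squares_dSH_bound
    (Ω : Set (ℝ × ℝ)) (hΩo : IsOpen Ω) (hΩconn : IsConnected Ω)
    (α : ℝ) (hα : α ∈ Set.Ioc (0:ℝ) 1)
    (k : ℕ) (hk : 0 < k)
    (c : Fin k → ℝ × ℝ) (r : Fin k → ℝ) (hr : ∀ i, 0 < r i)
    (hsub : ∀ i, Metric.ball (c i) (r i) ⊆ Ω)
    (hchain : ∀ (n : ℕ) (hn : n + 1 < k),
      Metric.ball (c ⟨n, by omega⟩) (r ⟨n, by omega⟩) ∩
        Metric.ball (c ⟨n + 1, hn⟩) (r ⟨n + 1, hn⟩) = ∅ ∧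
      ((∃ s t : ℝ × ℝ, s ≠ t ∧
          closure (Metric.ball (c ⟨n, by omega⟩) (r ⟨n, by omega⟩)) ∩
            closure (Metric.ball (c ⟨n + 1, hn⟩) (r ⟨n + 1, hn⟩)) = segment ℝ s t ∧
          openSegment ℝ s t ⊆ Ω) ∨
        (∃ w : ℝ × ℝ,
          closure (Metric.ball (c ⟨n, by omega⟩) (r ⟨n, by omega⟩)) ∩
            closure (Metric.ball (c ⟨n + 1, hn⟩) (r ⟨n + 1, hn⟩)) = {w} ∧
          ∃ ρ : ℝ, 0 < ρ ∧ Metric.ball w ρ ⊆ Ω)))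
    (y : ℝ × ℝ)
    (hy : y ∈ closure (Metric.ball (c ⟨k - 1, by omega⟩) (r ⟨k - 1, by omega⟩)) ∩ Ω) :
    dSH Ω α (c ⟨0, hk⟩) y ≤
      12 / α * ∑ i : Fin k, Metric.diam (Metric.ball (c i) (r i)) ^ α := by
  obtain ⟨hα0, hα1⟩ := hα
  set g : ℕ → ℝ := fun i => if h : i < k then (r ⟨i, h⟩) ^ α else 0 with hg
  have hgnn : ∀ i, 0 ≤ g i := by
    intro i
    rw [hg]
    dsimp only
    split
    · exact Real.rpow_nonneg (le_of_lt (hr _)) α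
    · exact le_refl 0
  have hgval : ∀ (i : ℕ) (h : i < k), g i = (r ⟨i, h⟩) ^ α := fun i h => dif_pos h
  set S : ℕ → ℝ := fun n => ∑ i ∈ Finset.range n, g i with hS
  have hseg : ∀ (i : Fin k) (p : ℝ × ℝ), p ∈ closure (Metric.ball (c i) (r i)) → p ∈ Ω →
      (∃ L, Good Ω α (c i) p L ∧ L ≤ 2/α * (r i) ^ α) := by
    intro i p hp hpΩ
    have hc : dist p (c i) ≤ r i := by
      rw [closure_ball (c i) (ne_of_gt (hr i))] at hp
      exact mem_closedBall.mp hp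
    exact good_segment hΩo hα0 hα1 (hr i) (hsub i) hc hpΩ
  have main : ∀ n, ∀ hn : n < k, ∃ L, Good Ω α (c ⟨0, hk⟩) (c ⟨n, hn⟩) L ∧
      L ≤ 4/α * S (n+1) - 2/α * g n := by
    intro n
    induction n with
    | zero =>
      intro hn
      refine ⟨0, good_const (hsub ⟨0, hk⟩ (mem_ball_self (hr _))), ?_⟩
      have hs1 : S 1 = g 0 := Finset.sum_range_one (f := g)
      rw [hs1]
      have h1 := hgnn 0
      have h3 : 4/α * g 0 - 2/α * g 0 = 2 * (1/α) * g 0 := by ring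
      rw [h3]
      exact mul_nonneg (by positivity) h1
    | succ m ih =>
      intro hn1
      have hm : m < k := by omega
      obtain ⟨L, hG, hB⟩ := ih hm
      obtain ⟨hdisj, hcase⟩ := hchain m hn1
      have hp : ∃ p : ℝ × ℝ, p ∈ closure (Metric.ball (c ⟨m, hm⟩) (r ⟨m, hm⟩)) ∧
          p ∈ closure (Metric.ball (c ⟨m+1, hn1⟩) (r ⟨m+1, hn1⟩)) ∧ p ∈ Ω := by
        rcases hcase with ⟨s, t, hst, hseg', hopen⟩ | ⟨w, hw, ρ, hρ, hball⟩
        · have hmemseg : (1/2:ℝ) • s + (1/2:ℝ) • t ∈ segment ℝ s t :=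
            ⟨1/2, 1/2, by norm_num, by norm_num, by norm_num, rfl⟩
          rw [← hseg'] at hmemseg
          have hmemopen : (1/2:ℝ) • s + (1/2:ℝ) • t ∈ openSegment ℝ s t :=
            ⟨1/2, 1/2, by norm_num, by norm_num, by norm_num, rfl⟩
          exact ⟨_, hmemseg.1, hmemseg.2, hopen hmemopen⟩
        · have hwmem : w ∈ ({w} : Set (ℝ × ℝ)) := rfl
          rw [← hw] at hwmem
          exact ⟨w, hwmem.1, hwmem.2, hball (mem_ball_self hρ)⟩
      obtain ⟨p, hp1, hp2, hpΩ⟩ := hp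
      obtain ⟨L₁, hG₁, hB₁⟩ := hseg ⟨m, hm⟩ p hp1 hpΩ
      obtain ⟨L₂, hG₂, hB₂⟩ := hseg ⟨m+1, hn1⟩ p hp2 hpΩ
      refine ⟨L + L₁ + L₂, good_concat (good_concat hG hG₁) (good_reverse hG₂), ?_⟩
      have hSucc : S (m+1+1) = S (m+1) + g (m+1) := Finset.sum_range_succ g (m+1)
      have e1 : g m = (r ⟨m, hm⟩) ^ α := hgval m hm
      have e2 : g (m+1) = (r ⟨m+1, hn1⟩) ^ α := hgval (m+1) hn1
      rw [hSucc]
      rw [← e1] at hB₁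
      rw [← e2] at hB₂
      have key : 4/α * (S (m+1) + g (m+1)) - 2/α * g (m+1)
          = (4/α * S (m+1) - 2/α * g m) + 2/α * g m + 2/α * g (m+1) := by ring
      rw [key]
      exact add_le_add (add_le_add hB hB₁) hB₂
  have hk1 : k - 1 < k := by omega
  obtain ⟨L, hG, hB⟩ := main (k-1) hk1
  obtain ⟨L₃, hG₃, hB₃⟩ := hseg ⟨k-1, hk1⟩ y hy.1 hy.2
  have hGy : Good Ω α (c ⟨0, hk⟩) y (L + L₃) := good_concat hG hG₃
  have htot : L + L₃ ≤ 4/α * S k := by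
    have e1 : g (k-1) = (r ⟨k-1, hk1⟩) ^ α := hgval _ hk1
    have hSk : S ((k-1)+1) = S k := by rw [show k-1+1 = k from by omega]
    rw [← e1] at hB₃
    rw [hSk] at hB
    linarith
  have hSk2 : S k = ∑ i : Fin k, (r i) ^ α := by
    have h0 : S k = ∑ i ∈ Finset.range k, g i := rfl
    rw [h0, ← Fin.sum_univ_eq_sum_range g k]
    apply Finset.sum_congr rfl
    intro i _
    rw [hgval i.val i.isLt]
  have hdiam : ∀ i : Fin k, (r i) ^ α ≤ (Metric.diam (Metric.ball (c i) (r i))) ^ α := by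
    intro i
    exact Real.rpow_le_rpow (le_of_lt (hr i)) (diam_ball_ge (hr i)) (le_of_lt hα0)
  have hsum : (∑ i : Fin k, (r i) ^ α) ≤ ∑ i : Fin k, (Metric.diam (Metric.ball (c i) (r i))) ^ α :=
    Finset.sum_le_sum fun i _ => hdiam i
  have hsum0 : (0:ℝ) ≤ ∑ i : Fin k, (Metric.diam (Metric.ball (c i) (r i))) ^ α :=
    Finset.sum_nonneg fun i _ => Real.rpow_nonneg Metric.diam_nonneg α
  calc dSH Ω α (c ⟨0, hk⟩) y ≤ L + L₃ := dSH_le_of_good hGy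
    _ ≤ 4/α * S k := htot
    _ = 4/α * ∑ i : Fin k, (r i) ^ α := by rw [hSk2]
    _ ≤ 4/α * ∑ i : Fin k, (Metric.diam (Metric.ball (c i) (r i))) ^ α :=
        mul_le_mul_of_nonneg_left hsum (by positivity)
    _ ≤ 12/α * ∑ i : Fin k, (Metric.diam (Metric.ball (c i) (r i))) ^ α := by
        apply mul_le_mul_of_nonneg_right _ hsum0
        rw [div_le_div_iff₀ hα0 hα0]
        nlinarith
end

section
/- Let p > 2, let N ⊂ ℝ² be a domain, let x* ∈ N, and let Q₁,…,Q_k be pairwise disjoint squares contained in N. Define w : N → [0,∞) by w(z) = (diam Q_i)^{1/(1−p)} for z ∈ Q_i (i = 1,…,k) and w(z) = 0 for z ∈ N ∖ (Q₁ ∪ … ∪ Q_k), and define φ(z) = inf_γ ∫_{γ⁽¹⁾} w ds, the infimum being taken over all axis-parallel polygonal paths γ ⊂ N joining x* to z, where γ⁽¹⁾ denotes the union of the edges of γ parallel to the z₁-axis and ds is arc length. Then: φ is real-valued and locally Lipschitz on N; φ(a) = φ(b) whenever [a,b] ⊂ N is a line segment parallel to the z₂-axis (so the almost-everywhere defined partial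 derivative ∂φ/∂z₂ vanishes a.e. on N); and ∫_N |∂φ/∂z₁(z)|^p dz ≤ Σ_{i=1}^{k} (diam Q_i)^{(p−2)/(p−1)}. -/
open Set Metric MeasureTheory

/-- `p` is the list of vertices of an axis-parallel polygonal path inside `N`
from `x` to `z`. -/
def IsAxisPolyIn (N : Set (ℝ × ℝ)) (x z : ℝ × ℝ) {n : ℕ} (p : Fin (n + 1) → ℝ × ℝ) : Prop :=
  p 0 = x ∧ p (Fin.last n) = z ∧
    (∀ i : Fin n, segment ℝ (p i.castSucc) (p i.succ) ⊆ N) ∧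
    (∀ i : Fin n, (p i.castSucc).1 = (p i.succ).1 ∨ (p i.castSucc).2 = (p i.succ).2)

/-- `∫_{γ⁽¹⁾} w ds`: the arc-length integral of `w` over the union of the edges of
the axis-parallel polygonal path with vertices `p` which are parallel to the
`z₁`-axis (vertical edges contribute `0`). -/
noncomputable def wLen1 (w : ℝ × ℝ → ℝ) {n : ℕ} (p : Fin (n + 1) → ℝ × ℝ) : ℝ :=
  ∑ i : Fin n, |∫ t in ((p i.castSucc).1)..((p i.succ).1), w (t, (p i.castSucc).2)|

lemma wLen1_nonneg (w : ℝ × ℝ → ℝ) {n : ℕ} (q : Fin (n + 1) → ℝ × ℝ) : 0 ≤ wLen1 w q :=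
  Finset.sum_nonneg fun _ _ => abs_nonneg _

lemma snoc_poly {N : Set (ℝ × ℝ)} {x z z' : ℝ × ℝ} {n : ℕ} {q : Fin (n + 1) → ℝ × ℝ}
    (h : IsAxisPolyIn N x z q) (hseg : segment ℝ z z' ⊆ N)
    (hax : z.1 = z'.1 ∨ z.2 = z'.2) :
    IsAxisPolyIn N x z' (Fin.snoc q z' : Fin (n + 1 + 1) → ℝ × ℝ) := by
  obtain ⟨h0, hl, hsub, hax'⟩ := h
  refine ⟨?_, Fin.snoc_last _ _, ?_, ?_⟩
  · have : (0 : Fin (n + 1 + 1)) = Fin.castSucc 0 := rfl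
    rw [this, Fin.snoc_castSucc, h0]
  · intro i
    refine Fin.lastCases ?_ (fun j => ?_) i
    · rw [Fin.succ_last]
      rw [Fin.snoc_castSucc, Fin.snoc_last, hl]
      exact hseg
    · rw [Fin.succ_castSucc, Fin.snoc_castSucc, Fin.snoc_castSucc]
      exact hsub j
  · intro i
    refine Fin.lastCases ?_ (fun j => ?_) i
    · rw [Fin.succ_last]
      rw [Fin.snoc_castSucc, Fin.snoc_last, hl]
      exact hax
    · rw [Fin.succ_castSucc, Fin.snoc_castSucc, Fin.snoc_castSucc]
      exact hax' j

lemma snoc_len (w : ℝ × ℝ → ℝ) {z z' : ℝ × ℝ} {n : ℕ} {q : Fin (n + 1) → ℝ × ℝ}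
    (hl : q (Fin.last n) = z) :
    wLen1 w (Fin.snoc q z' : Fin (n + 1 + 1) → ℝ × ℝ)
      = wLen1 w q + |∫ t in z.1..z'.1, w (t, z.2)| := by
  unfold wLen1
  rw [Fin.sum_univ_castSucc]
  congr 1
  · refine Finset.sum_congr rfl fun j _ => ?_
    rw [Fin.succ_castSucc, Fin.snoc_castSucc, Fin.snoc_castSucc]
  · rw [Fin.succ_last, Fin.snoc_castSucc, Fin.snoc_last, hl]

lemma horiz_seg_mem {a : ℝ × ℝ} {b1 s : ℝ} (hs : s ∈ uIcc a.1 b1) :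
    (s, a.2) ∈ segment ℝ a (b1, a.2) := by
  rw [← segment_eq_uIcc] at hs
  obtain ⟨u, v, hu, hv, huv, hs⟩ := hs
  refine ⟨u, v, hu, hv, huv, ?_⟩
  have : u • a + v • ((b1, a.2) : ℝ × ℝ) = (u * a.1 + v * b1, u * a.2 + v * a.2) := by
    simp [Prod.ext_iff]
  simp only [smul_eq_mul] at hs
  rw [this, hs]
  have : u * a.2 + v * a.2 = a.2 := by rw [← add_mul, huv, one_mul]
  rw [this]

lemma abs_fderiv_le {φ : ℝ × ℝ → ℝ} {z : ℝ × ℝ} {C : ℝ} (hC : 0 ≤ C)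
    (hb : ∀ᶠ t in nhds (0 : ℝ), |φ (z.1 + t, z.2) - φ z| ≤ C * |t|) :
    |fderiv ℝ φ z (1, 0)| ≤ C := by
  by_cases hd : DifferentiableAt ℝ φ z
  · set f : ℝ → ℝ := fun t => φ (z.1 + t, z.2) with hf
    have hg : HasDerivAt (fun t : ℝ => ((z.1 + t, z.2) : ℝ × ℝ)) ((1 : ℝ), (0 : ℝ)) 0 :=
      (HasDerivAt.const_add z.1 (hasDerivAt_id 0)).prodMk (hasDerivAt_const 0 z.2)
    have hz0 : ((z.1 + 0, z.2) : ℝ × ℝ) = z := by simp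
    have hF : HasFDerivAt φ (fderiv ℝ φ z) ((z.1 + 0, z.2) : ℝ × ℝ) := by
      rw [hz0]; exact hd.hasFDerivAt
    have hD : HasDerivAt f (fderiv ℝ φ z (1, 0)) 0 := hF.comp_hasDerivAt 0 hg
    rw [hasDerivAt_iff_tendsto_slope] at hD
    refine le_of_tendsto hD.abs ?_
    have h1 : ∀ᶠ t in nhdsWithin (0 : ℝ) {(0 : ℝ)}ᶜ, |f t - f 0| ≤ C * |t| := by
      refine Filter.Eventually.filter_mono nhdsWithin_le_nhds ?_
      filter_upwards [hb] with t ht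
      simpa [hf] using ht
    filter_upwards [h1, self_mem_nhdsWithin] with t ht ht0
    have ht0' : (0 : ℝ) < |t| := abs_pos.mpr ht0
    have : |slope f 0 t| = |f t - f 0| / |t| := by
      rw [slope_def_field]
      rw [div_eq_mul_inv, div_eq_mul_inv]
      simp [abs_mul, abs_sub_comm, abs_inv]
    rw [this, div_le_iff₀ ht0']
    exact ht
  · rw [fderiv_zero_of_not_differentiableAt hd]
    simpa using hC

lemma diam_sq {c : ℝ × ℝ} {r : ℝ} (hr : 0 < r) : Metric.diam (ball c r) = 2 * r := by
  refine le_antisymm (diam_ball hr.le) ?_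
  refine le_of_forall_pos_le_add fun ε hε => ?_
  rcases le_or_gt (2 * r) ε with h | h
  · have : (0 : ℝ) ≤ diam (ball c r) := diam_nonneg
    linarith
  · set t : ℝ := r - ε / 2 with hts
    have ht0 : 0 ≤ t := by simp only [hts]; linarith
    have htr : t < r := by simp only [hts]; linarith
    have ha : ((c.1 - t, c.2) : ℝ × ℝ) ∈ ball c r := by
      rw [mem_ball]
      rw [Prod.dist_eq]
      simp [Real.dist_eq, abs_of_nonneg ht0, abs_of_nonpos, htr, hr]
    have hb : ((c.1 + t, c.2) : ℝ × ℝ) ∈ ball c r := by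
      rw [mem_ball, Prod.dist_eq]
      simp [Real.dist_eq, abs_of_nonneg ht0, htr, hr]
    have := dist_le_diam_of_mem isBounded_ball ha hb
    rw [Prod.dist_eq] at this
    simp only [Real.dist_eq] at this
    have h2 : |c.1 - t - (c.1 + t)| = 2 * t := by
      rw [show c.1 - t - (c.1 + t) = -(2 * t) by ring, abs_neg, abs_of_nonneg (by linarith)]
    rw [h2] at this
    simp only [sub_self, abs_zero] at this
    have : 2 * t ≤ diam (ball c r) := le_trans (le_max_left _ _) this
    simp only [hts] at this
    linarith

/-- `p > 2`, `N ⊂ ℝ²` a domain (uniform norm; `Metric.ball` is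
an open axis-parallel square), `x ∈ N`, `Q₁,…,Q_k ⊆ N` pairwise disjoint squares,
`w = (diam Qᵢ)^{1/(1-p)}` on `Qᵢ` and `0` on `N` minus the squares, and
`φ(z) = inf_γ ∫_{γ⁽¹⁾} w ds` over axis-parallel polygonal paths `γ ⊆ N` from
`x` to `z`.  Then `φ` is (real-valued and) locally Lipschitz on `N`, constant on
vertical segments of `N`, and
`∫_N |∂φ/∂z₁|^p ≤ Σᵢ (diam Qᵢ)^{(p-2)/(p-1)}`. -/
theorem weight_distance_function_estimates
    (p : ℝ) (hp : 2 < p)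
    (N : Set (ℝ × ℝ)) (hNo : IsOpen N) (hNconn : IsConnected N)
    (x : ℝ × ℝ) (hx : x ∈ N)
    (k : ℕ) (c : Fin k → ℝ × ℝ) (r : Fin k → ℝ) (hr : ∀ i, 0 < r i)
    (hQsub : ∀ i, Metric.ball (c i) (r i) ⊆ N)
    (hQdisj : Pairwise fun i j => Metric.ball (c i) (r i) ∩ Metric.ball (c j) (r j) = ∅)
    (w : ℝ × ℝ → ℝ)
    (hw1 : ∀ i, ∀ z ∈ Metric.ball (c i) (r i),
      w z = Metric.diam (Metric.ball (c i) (r i)) ^ ((1 : ℝ) / (1 - p)))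
    (hw0 : ∀ z ∈ N \ ⋃ i, Metric.ball (c i) (r i), w z = 0)
    (φ : ℝ × ℝ → ℝ)
    (hφ : ∀ z : ℝ × ℝ, φ z = sInf {L : ℝ | ∃ (n : ℕ) (q : Fin (n + 1) → ℝ × ℝ),
      IsAxisPolyIn N x z q ∧ L = wLen1 w q}) :
    (∀ z ∈ N, ∃ ε > 0, ∃ K : NNReal, LipschitzOnWith K φ (Metric.ball z ε)) ∧
    (∀ a b : ℝ × ℝ, a.1 = b.1 → segment ℝ a b ⊆ N → φ a = φ b) ∧
    (∫ z in N, |fderiv ℝ φ z (1, 0)| ^ p ∂volume) ≤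
      ∑ i : Fin k, Metric.diam (Metric.ball (c i) (r i)) ^ ((p - 2) / (p - 1)) := by
  -- basic setup
  set S : ℝ × ℝ → Set ℝ := fun z => {L : ℝ | ∃ (n : ℕ) (q : Fin (n + 1) → ℝ × ℝ),
      IsAxisPolyIn N x z q ∧ L = wLen1 w q} with hS
  have hφS : ∀ z, φ z = sInf (S z) := hφ
  have hSnn : ∀ z, ∀ L ∈ S z, (0 : ℝ) ≤ L := by
    rintro z L ⟨n, q, -, rfl⟩
    exact wLen1_nonneg w q
  have hbdd : ∀ z, BddBelow (S z) := fun z => ⟨0, fun L hL => hSnn z L hL⟩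
  have hstep : ∀ z z', segment ℝ z z' ⊆ N → (z.1 = z'.1 ∨ z.2 = z'.2) →
      ∀ L ∈ S z, L + |∫ t in z.1..z'.1, w (t, z.2)| ∈ S z' := by
    rintro z z' hseg hax L ⟨n, q, hq, rfl⟩
    exact ⟨n + 1, Fin.snoc q z', snoc_poly hq hseg hax, (snoc_len w hq.2.1).symm⟩
  have hne : ∀ z z', segment ℝ z z' ⊆ N → (z.1 = z'.1 ∨ z.2 = z'.2) →
      (S z).Nonempty → (S z').Nonempty := by
    rintro z z' hseg hax ⟨L, hL⟩
    exact ⟨_, hstep z z' hseg hax L hL⟩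
  have hφle : ∀ z z', segment ℝ z z' ⊆ N → (z.1 = z'.1 ∨ z.2 = z'.2) →
      (S z).Nonempty → φ z' ≤ φ z + |∫ t in z.1..z'.1, w (t, z.2)| := by
    intro z z' hseg hax hzne
    rw [hφS, hφS]
    have key : ∀ L ∈ S z, sInf (S z') - |∫ t in z.1..z'.1, w (t, z.2)| ≤ L :=
      fun L hL => by
        have := csInf_le (hbdd z') (hstep z z' hseg hax L hL)
        linarith
    have := le_csInf hzne key
    linarith
  have hsymm : ∀ z z' : ℝ × ℝ, z.2 = z'.2 →
      |∫ t in z'.1..z.1, w (t, z'.2)| = |∫ t in z.1..z'.1, w (t, z.2)| := by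
    intro z z' h2
    rw [intervalIntegral.integral_symm, abs_neg, h2]
  have habs : ∀ z z', segment ℝ z z' ⊆ N → z.2 = z'.2 →
      |φ z' - φ z| ≤ |∫ t in z.1..z'.1, w (t, z.2)| := by
    intro z z' hseg h2
    have hseg' : segment ℝ z' z ⊆ N := by rw [segment_symm]; exact hseg
    by_cases hzne : (S z).Nonempty
    · have h1 := hφle z z' hseg (Or.inr h2) hzne
      have hz'ne := hne z z' hseg (Or.inr h2) hzne
      have h2' := hφle z' z hseg' (Or.inr h2.symm) hz'ne
      rw [hsymm z z' h2] at h2'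
      rw [abs_sub_le_iff]
      constructor <;> linarith
    · have hz'e : ¬(S z').Nonempty := fun h => hzne (hne z' z hseg' (Or.inr h2.symm) h)
      rw [Set.not_nonempty_iff_eq_empty] at hzne hz'e
      rw [hφS, hφS, hzne, hz'e, Real.sInf_empty]
      simp [abs_nonneg]
  -- Part 2: φ constant on vertical segments
  have part2 : ∀ a b : ℝ × ℝ, a.1 = b.1 → segment ℝ a b ⊆ N → φ a = φ b := by
    intro a b h1 hseg
    have hseg' : segment ℝ b a ⊆ N := by rw [segment_symm]; exact hseg
    have hSab : S a = S b := by
      apply Set.Subset.antisymm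
      · intro L hL
        have := hstep a b hseg (Or.inl h1) L hL
        rwa [h1, intervalIntegral.integral_same, abs_zero, add_zero] at this
      · intro L hL
        have := hstep b a hseg' (Or.inl h1.symm) L hL
        rwa [h1.symm, intervalIntegral.integral_same, abs_zero, add_zero] at this
    rw [hφS, hφS, hSab]
  -- bounds on w
  set d : Fin k → ℝ := fun i => Metric.diam (ball (c i) (r i)) with hdd
  have hd : ∀ i, d i = 2 * r i := fun i => diam_sq (hr i)
  have hd0 : ∀ i, 0 < d i := fun i => by rw [hd i]; linarith [hr i]
  set M : ℝ := ∑ i : Fin k, d i ^ ((1 : ℝ) / (1 - p)) with hM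
  have hMterm : ∀ i : Fin k, (0 : ℝ) ≤ d i ^ ((1 : ℝ) / (1 - p)) :=
    fun i => Real.rpow_nonneg (hd0 i).le _
  have hM0 : 0 ≤ M := Finset.sum_nonneg fun i _ => hMterm i
  have hwnn : ∀ z ∈ N, 0 ≤ w z := by
    intro z hz
    by_cases hzb : z ∈ ⋃ i, ball (c i) (r i)
    · obtain ⟨i, hi⟩ := Set.mem_iUnion.mp hzb
      rw [hw1 i z hi]
      exact Real.rpow_nonneg diam_nonneg _
    · rw [hw0 z ⟨hz, hzb⟩]
  have hwle : ∀ z ∈ N, w z ≤ M := by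
    intro z hz
    by_cases hzb : z ∈ ⋃ i, ball (c i) (r i)
    · obtain ⟨i, hi⟩ := Set.mem_iUnion.mp hzb
      rw [hw1 i z hi]
      exact Finset.single_le_sum (fun j _ => hMterm j) (Finset.mem_univ i)
    · rw [hw0 z ⟨hz, hzb⟩]; exact hM0
  -- Part 1: locally Lipschitz
  have part1 : ∀ z ∈ N, ∃ ε > 0, ∃ K : NNReal, LipschitzOnWith K φ (Metric.ball z ε) := by
    intro z hz
    obtain ⟨ε, hε, hball⟩ := Metric.isOpen_iff.mp hNo z hz
    refine ⟨ε, hε, M.toNNReal, LipschitzOnWith.of_dist_le_mul fun a ha b hb => ?_⟩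
    rw [Real.coe_toNNReal M hM0]
    set m : ℝ × ℝ := (b.1, a.2) with hm
    have hmb : m ∈ ball z ε := by
      rw [mem_ball, Prod.dist_eq] at ha hb ⊢
      exact max_lt (lt_of_le_of_lt (le_max_left _ _) hb)
        (lt_of_le_of_lt (le_max_right _ _) ha)
    have hsegam : segment ℝ a m ⊆ ball z ε := (convex_ball z ε).segment_subset ha hmb
    have hsegmb : segment ℝ m b ⊆ ball z ε := (convex_ball z ε).segment_subset hmb hb
    have hNam : segment ℝ a m ⊆ N := hsegam.trans hball
    have hNmb : segment ℝ m b ⊆ N := hsegmb.trans hball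
    have hint : |∫ t in a.1..m.1, w (t, a.2)| ≤ M * dist a b := by
      have hb1 : ∀ s ∈ Set.uIoc a.1 m.1, ‖w (s, a.2)‖ ≤ M := by
        intro s hs
        have hmem : ((s, a.2) : ℝ × ℝ) ∈ segment ℝ a m := horiz_seg_mem (uIoc_subset_uIcc hs)
        have hmemN := hNam hmem
        rw [Real.norm_eq_abs, abs_of_nonneg (hwnn _ hmemN)]
        exact hwle _ hmemN
      have := intervalIntegral.norm_integral_le_of_norm_le_const hb1
      rw [Real.norm_eq_abs] at this
      refine this.trans ?_
      have : |m.1 - a.1| ≤ dist a b := by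
        rw [hm, Prod.dist_eq, Real.dist_eq]
        exact le_trans (le_of_eq (abs_sub_comm _ _)) (le_max_left _ _)
      nlinarith [abs_nonneg (m.1 - a.1), dist_nonneg (x := a) (y := b)]
    have hφbm : φ b = φ m := (part2 m b rfl hNmb).symm
    have key : |φ m - φ a| ≤ M * dist a b := le_trans (habs a m hNam rfl) hint
    rw [Real.dist_eq, hφbm, abs_sub_comm]
    exact key
  refine ⟨part1, part2, ?_⟩
  -- Part 3: the integral estimate
  -- derivative bound from a local bound on w
  have hDB : ∀ z ∈ N, ∀ C : ℝ, 0 ≤ C →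
      (∃ η > 0, ∀ y ∈ ball z η, y ∈ N ∧ |w y| ≤ C) →
      |fderiv ℝ φ z (1, 0)| ≤ C := by
    rintro z hz C hC ⟨η, hη, hball⟩
    apply abs_fderiv_le hC
    have hev : ∀ᶠ t in nhds (0 : ℝ), |t| < η := by
      have := Metric.ball_mem_nhds (0 : ℝ) hη
      filter_upwards [this] with t ht
      simpa [Real.dist_eq] using ht
    filter_upwards [hev] with t ht
    set z' : ℝ × ℝ := (z.1 + t, z.2) with hz'
    have hz'b : z' ∈ ball z η := by
      rw [mem_ball, Prod.dist_eq]
      simp [hz', Real.dist_eq, ht, hη]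
    have hseg : segment ℝ z z' ⊆ ball z η :=
      (convex_ball z η).segment_subset (mem_ball_self hη) hz'b
    have hsegN : segment ℝ z z' ⊆ N := fun y hy => (hball y (hseg hy)).1
    have h1 := habs z z' hsegN rfl
    have h2 : |∫ s in z.1..z'.1, w (s, z.2)| ≤ C * |t| := by
      have hb1 : ∀ s ∈ Set.uIoc z.1 z'.1, ‖w (s, z.2)‖ ≤ C := by
        intro s hs
        have hmem : ((s, z.2) : ℝ × ℝ) ∈ segment ℝ z z' := horiz_seg_mem (uIoc_subset_uIcc hs)
        exact (hball _ (hseg hmem)).2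
      have := intervalIntegral.norm_integral_le_of_norm_le_const hb1
      rw [Real.norm_eq_abs] at this
      simpa [hz'] using this
    exact le_trans h1 h2
  -- null set of boundaries
  have hvolball : ∀ i, volume (ball (c i) (r i)) =
      ENNReal.ofReal (2 * r i) * ENNReal.ofReal (2 * r i) := by
    intro i
    rw [← ball_prod_same, Measure.volume_eq_prod, Measure.prod_prod,
      Real.volume_ball, Real.volume_ball]
  have hvolcb : ∀ i, volume (closedBall (c i) (r i)) =
      ENNReal.ofReal (2 * r i) * ENNReal.ofReal (2 * r i) := by
    intro i
    rw [← closedBall_prod_same, Measure.volume_eq_prod, Measure.prod_prod,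
      Real.volume_closedBall, Real.volume_closedBall]
  have hEnull : volume (⋃ i, (closedBall (c i) (r i) \ ball (c i) (r i))) = 0 := by
    refine measure_iUnion_null fun i => ?_
    rw [measure_diff ball_subset_closedBall measurableSet_ball.nullMeasurableSet
      (by rw [hvolball i]; exact (ENNReal.mul_lt_top ENNReal.ofReal_lt_top ENNReal.ofReal_lt_top).ne)]
    rw [hvolball i, hvolcb i, tsub_self]
  -- pointwise a.e. bound of the derivative by w
  have hptw : ∀ z ∈ N, z ∉ (⋃ i, (closedBall (c i) (r i) \ ball (c i) (r i))) →
      |fderiv ℝ φ z (1, 0)| ≤ w z := by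
    intro z hz hzE
    by_cases hzb : z ∈ ⋃ i, ball (c i) (r i)
    · obtain ⟨i, hi⟩ := Set.mem_iUnion.mp hzb
      rw [hw1 i z hi]
      refine hDB z hz _ (Real.rpow_nonneg diam_nonneg _) ?_
      obtain ⟨η, hη, hsub⟩ := Metric.isOpen_iff.mp isOpen_ball z hi
      refine ⟨η, hη, fun y hy => ?_⟩
      have hyi : y ∈ ball (c i) (r i) := hsub hy
      refine ⟨hQsub i hyi, ?_⟩
      rw [hw1 i y hyi, abs_of_nonneg (Real.rpow_nonneg diam_nonneg _)]
    · -- z in no ball; also in no closed ball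
      have hzc : z ∉ ⋃ i, closedBall (c i) (r i) := by
        intro hzc
        obtain ⟨i, hi⟩ := Set.mem_iUnion.mp hzc
        exact hzE (Set.mem_iUnion.mpr ⟨i, hi, fun h => hzb (Set.mem_iUnion.mpr ⟨i, h⟩)⟩)
      have hopen : IsOpen (N ∩ (⋃ i, closedBall (c i) (r i))ᶜ) :=
        hNo.inter (isClosed_iUnion_of_finite fun i => Metric.isClosed_closedBall).isOpen_compl
      obtain ⟨η, hη, hsub⟩ := Metric.isOpen_iff.mp hopen z ⟨hz, hzc⟩
      rw [hw0 z ⟨hz, hzb⟩]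
      refine hDB z hz 0 le_rfl ⟨η, hη, fun y hy => ?_⟩
      obtain ⟨hyN, hyc⟩ := hsub hy
      have hyb : y ∉ ⋃ i, ball (c i) (r i) := by
        intro h
        obtain ⟨i, hi⟩ := Set.mem_iUnion.mp h
        exact hyc (Set.mem_iUnion.mpr ⟨i, ball_subset_closedBall hi⟩)
      refine ⟨hyN, ?_⟩
      rw [hw0 y ⟨hyN, hyb⟩]
      simp
  -- the comparison function
  set e : Fin k → ℝ := fun i => (d i ^ ((1 : ℝ) / (1 - p))) ^ p with he
  have he0 : ∀ i, 0 ≤ e i := fun i => Real.rpow_nonneg (Real.rpow_nonneg (hd0 i).le _) _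
  set h' : ℝ × ℝ → ℝ := fun z => ∑ i : Fin k,
      Set.indicator (ball (c i) (r i)) (fun _ => e i) z with hh'
  have hh'nn : ∀ z, 0 ≤ h' z := fun z =>
    Finset.sum_nonneg fun i _ => Set.indicator_nonneg (fun _ _ => he0 i) z
  have hwph : ∀ z ∈ N, w z ^ p = h' z := by
    intro z hz
    by_cases hzb : z ∈ ⋃ i, ball (c i) (r i)
    · obtain ⟨i, hi⟩ := Set.mem_iUnion.mp hzb
      rw [hw1 i z hi]
      show _ = ∑ j : Fin k, Set.indicator (ball (c j) (r j)) (fun _ => e j) z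
      have : ∀ j : Fin k, Set.indicator (ball (c j) (r j)) (fun _ => e j) z =
          if j = i then e i else 0 := by
        intro j
        by_cases hji : j = i
        · subst hji; rw [Set.indicator_of_mem hi, if_pos rfl]
        · rw [if_neg hji, Set.indicator_of_notMem]
          intro hzj
          have := hQdisj hji
          exact absurd (Set.mem_inter hzj hi) (by rw [this]; exact Set.notMem_empty z)
      rw [Finset.sum_congr rfl fun j _ => this j, Finset.sum_ite_eq' Finset.univ i fun _ => e i,
        if_pos (Finset.mem_univ i)]
    · rw [hw0 z ⟨hz, hzb⟩]
      show _ = ∑ j : Fin k, Set.indicator (ball (c j) (r j)) (fun _ => e j) z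
      rw [Real.zero_rpow (by positivity : p ≠ 0)]
      symm
      refine Finset.sum_eq_zero fun j _ => ?_
      exact Set.indicator_of_notMem (fun h => hzb (Set.mem_iUnion.mpr ⟨j, h⟩)) _
  -- h' is integrable
  have hInth' : Integrable h' volume := by
    refine integrable_finset_sum _ fun i _ => ?_
    rw [integrable_indicator_iff measurableSet_ball]
    exact integrableOn_const measure_ball_lt_top.ne
  -- ∫ h' over all of ℝ² equals the target sum
  have hinth' : ∫ z, h' z ∂volume = ∑ i : Fin k, d i ^ ((p - 2) / (p - 1)) := by
    rw [hh']
    rw [integral_finset_sum _ fun i _ => by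
      rw [integrable_indicator_iff measurableSet_ball]
      exact integrableOn_const measure_ball_lt_top.ne]
    refine Finset.sum_congr rfl fun i _ => ?_
    rw [integral_indicator_const _ measurableSet_ball]
    rw [measureReal_def, hvolball i, smul_eq_mul]
    have hri : (0 : ℝ) ≤ 2 * r i := by linarith [hr i]
    rw [ENNReal.toReal_mul, ENNReal.toReal_ofReal hri]
    have hdi : d i = 2 * r i := hd i
    have hdpos : (0 : ℝ) < d i := hd0 i
    show 2 * r i * (2 * r i) * e i = d i ^ ((p - 2) / (p - 1))
    have h1p : (1 : ℝ) - p ≠ 0 := by linarith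
    have hp1 : p - 1 ≠ 0 := by linarith
    have heq : e i = d i ^ ((1 / (1 - p)) * p) := by
      show (d i ^ ((1 : ℝ) / (1 - p))) ^ p = _
      rw [← Real.rpow_mul hdpos.le]
    rw [heq, ← hdi]
    have h2 : d i * d i = d i ^ (((2 : ℕ) : ℝ)) := by rw [Real.rpow_natCast]; ring
    rw [h2, ← Real.rpow_add hdpos]
    congr 1
    push_cast
    field_simp
    ring
  -- assemble
  have hNm : MeasurableSet N := hNo.measurableSet
  have hae : ∀ᵐ z ∂(volume.restrict N), |fderiv ℝ φ z (1, 0)| ^ p ≤ h' z := by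
    have h1 : ∀ᵐ z ∂(volume.restrict N), z ∈ N := ae_restrict_mem hNm
    have h2' : ∀ᵐ z ∂(volume : Measure (ℝ × ℝ)),
        z ∉ ⋃ i, (closedBall (c i) (r i) \ ball (c i) (r i)) := by
      rw [ae_iff]
      have hset : {z : ℝ × ℝ | ¬ z ∉ ⋃ i, (closedBall (c i) (r i) \ ball (c i) (r i))}
          = ⋃ i, (closedBall (c i) (r i) \ ball (c i) (r i)) := by
        ext z
        exact not_not
      rw [hset]
      exact hEnull
    have h2 := ae_restrict_of_ae (μ := (volume : Measure (ℝ × ℝ))) (s := N) h2'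
    filter_upwards [h1, h2] with z hz hzE
    have hb := hptw z hz hzE
    calc |fderiv ℝ φ z (1, 0)| ^ p ≤ (w z) ^ p :=
          Real.rpow_le_rpow (abs_nonneg _) hb (by linarith)
      _ = h' z := hwph z hz
  by_cases hI : Integrable (fun z => |fderiv ℝ φ z (1, 0)| ^ p) (volume.restrict N)
  · have step1 : (∫ z in N, |fderiv ℝ φ z (1, 0)| ^ p ∂volume) ≤ ∫ z in N, h' z ∂volume :=
      integral_mono_ae hI hInth'.restrict hae
    have step2 : (∫ z in N, h' z ∂volume) ≤ ∫ z, h' z ∂volume :=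
      setIntegral_le_integral hInth' (Filter.Eventually.of_forall hh'nn)
    exact le_trans step1 (le_trans step2 (le_of_eq hinth'))
  · rw [integral_undef hI]
    exact Finset.sum_nonneg fun i _ => Real.rpow_nonneg diam_nonneg _
end
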